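/- For a linear word equation (no variable occurs more than once on either side, and in total at most once in the whole equation) of size N, any derivation using the unfolding rules ⟨1SEA-CONST-SUCC⟩, ⟨1SEA-SMALL-*⟩ (substituting a variable by ε or by c·u₁) and ⟨1SEA-BIG⟩-case-(i) strictly decreases the equation size; hence every derivation path has length at most N. -/

import Mathlib

abbrev WSym (V C : Type*) := V ⊕ C

def subst {V C : Type*} [DecidableEq V] (v : V) (t : List (WSym V C)) :
    List (WSym V C) → List (WSym V C) :=
  fun w => w.flatMap fun s =>
    match s with
    | Sum.inl x => if x = v then t else [Sum.inl x]
    | Sum.inr c => [Sum.inr c]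

def eqSize {V C : Type*} (e : List (WSym V C) × List (WSym V C)) : ℕ :=
  e.1.length + e.2.length

def Linear {V C : Type*} [DecidableEq V] [DecidableEq C]
    (e : List (WSym V C) × List (WSym V C)) : Prop :=
  ∀ v : V, (e.1 ++ e.2).count (Sum.inl v) ≤ 1

inductive Step {V C : Type*} [DecidableEq V] :
    List (WSym V C) × List (WSym V C) → List (WSym V C) × List (WSym V C) → Prop
  | constSucc (c : C) (l r : List (WSym V C)) :
      Step (Sum.inr c :: l, Sum.inr c :: r) (l, r)
  | smallLEps (v : V) (c : C) (l r : List (WSym V C)) :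
      Step (Sum.inl v :: l, Sum.inr c :: r)
           (subst v [] l, Sum.inr c :: subst v [] r)
  | smallREps (v : V) (c : C) (l r : List (WSym V C)) :
      Step (Sum.inr c :: l, Sum.inl v :: r)
           (Sum.inr c :: subst v [] l, subst v [] r)
  | smallLCons (v v₁ : V) (c : C) (l r : List (WSym V C))
      (hfresh : Sum.inl v₁ ∉ l ++ r) :
      Step (Sum.inl v :: l, Sum.inr c :: r)
           (Sum.inl v₁ :: subst v [Sum.inr c, Sum.inl v₁] l,
            subst v [Sum.inr c, Sum.inl v₁] r)
  | smallRCons (v v₁ : V) (c : C) (l r : List (WSym V C))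
      (hfresh : Sum.inl v₁ ∉ l ++ r) :
      Step (Sum.inr c :: l, Sum.inl v :: r)
           (subst v [Sum.inr c, Sum.inl v₁] l,
            Sum.inl v₁ :: subst v [Sum.inr c, Sum.inl v₁] r)
  | bigEq (v₁ v₂ : V) (l r : List (WSym V C)) :
      Step (Sum.inl v₁ :: l, Sum.inl v₂ :: r)
           (subst v₂ [Sum.inl v₁] l, subst v₂ [Sum.inl v₁] r)

lemma subst_id {V C : Type*} [DecidableEq V] (v : V) (t : List (WSym V C))
    (w : List (WSym V C)) (h : Sum.inl v ∉ w) : subst v t w = w := by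
  induction w with
  | nil => rfl
  | cons a w ih =>
    simp only [List.mem_cons, not_or] at h
    cases a with
    | inl x =>
      have hx : x ≠ v := fun e => h.1 (by rw [e])
      simp [subst, hx] at ih ⊢
      exact ih h.2
    | inr c =>
      simp [subst] at ih ⊢
      exact ih h.2

instance lbeqSum {V C : Type*} [DecidableEq V] [DecidableEq C] : LawfulBEq (V ⊕ C) := by
  refine { eq_of_beq := fun {a b} h => ?_, rfl := fun {a} => ?_ }
  swap
  · cases a <;> cases b <;> simp_all [show ∀ x y : V, ((Sum.inl x : V ⊕ C) == Sum.inl y) = (x == y) from fun _ _ => rfl,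
      show ∀ x y : C, ((Sum.inr x : V ⊕ C) == Sum.inr y) = (x == y) from fun _ _ => rfl,
      show ∀ (x : V) (y : C), ((Sum.inl x : V ⊕ C) == Sum.inr y) = false from fun _ _ => rfl,
      show ∀ (x : C) (y : V), ((Sum.inr x : V ⊕ C) == Sum.inl y) = false from fun _ _ => rfl]
  · cases a <;> simp [show ∀ x y : V, ((Sum.inl x : V ⊕ C) == Sum.inl y) = (x == y) from fun _ _ => rfl,
      show ∀ x y : C, ((Sum.inr x : V ⊕ C) == Sum.inr y) = (x == y) from fun _ _ => rfl]

lemma count_zero_notmem {V C : Type*} [DecidableEq V] [DecidableEq C]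
    (s : WSym V C) (w : List (WSym V C)) (h : w.count s = 0) : s ∉ w :=
  List.count_eq_zero.1 h

lemma step_dec {V C : Type*} [DecidableEq V] [DecidableEq C]
    (e e' : List (WSym V C) × List (WSym V C))
    (hL : Linear e) (hS : Step e e') : eqSize e' < eqSize e ∧ Linear e' := by
  cases hS with
  | constSucc c l r =>
      refine ⟨by simp [eqSize]; omega, fun x => ?_⟩
      have hsub : List.Sublist (l ++ r) ((Sum.inr c :: l) ++ (Sum.inr c :: r)) :=
        (List.sublist_cons_self _ _).append (List.sublist_cons_self _ _)
      exact le_trans (hsub.count_le _) (hL x)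
  | smallLEps v c l r =>
      have h := hL v
      rw [List.count_append, List.count_cons_self,
        List.count_cons_of_ne (by simp)] at h
      have hl : Sum.inl v ∉ l := count_zero_notmem _ _ (by omega)
      have hr : Sum.inl v ∉ r := count_zero_notmem _ _ (by omega)
      rw [subst_id v _ l hl, subst_id v _ r hr]
      refine ⟨by simp [eqSize], fun x => ?_⟩
      have hsub : List.Sublist (l ++ (Sum.inr c :: r)) ((Sum.inl v :: l) ++ (Sum.inr c :: r)) :=
        (List.sublist_cons_self _ _).append (List.Sublist.refl _)
      exact le_trans (hsub.count_le _) (hL x)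
  | smallREps v c l r =>
      have h := hL v
      rw [List.count_append, List.count_cons_self,
        List.count_cons_of_ne (by simp)] at h
      have hl : Sum.inl v ∉ l := count_zero_notmem _ _ (by omega)
      have hr : Sum.inl v ∉ r := count_zero_notmem _ _ (by omega)
      rw [subst_id v _ l hl, subst_id v _ r hr]
      refine ⟨by simp [eqSize], fun x => ?_⟩
      have hsub : List.Sublist ((Sum.inr c :: l) ++ r) ((Sum.inr c :: l) ++ (Sum.inl v :: r)) :=
        (List.Sublist.refl _).append (List.sublist_cons_self _ _)
      exact le_trans (hsub.count_le _) (hL x)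
  | smallLCons v v₁ c l r hfresh =>
      have h := hL v
      rw [List.count_append, List.count_cons_self,
        List.count_cons_of_ne (by simp)] at h
      have hl : Sum.inl v ∉ l := count_zero_notmem _ _ (by omega)
      have hr : Sum.inl v ∉ r := count_zero_notmem _ _ (by omega)
      rw [subst_id v _ l hl, subst_id v _ r hr]
      refine ⟨by simp [eqSize], fun x => ?_⟩
      show ((Sum.inl v₁ :: l) ++ r).count (Sum.inl x) ≤ 1
      rw [List.cons_append]
      by_cases hx : x = v₁
      · subst hx
        rw [List.count_cons_self, List.count_eq_zero.2 hfresh]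
      · rw [List.count_cons_of_ne (by simpa using Ne.symm hx)]
        have hsub : List.Sublist (l ++ r) ((Sum.inl v :: l) ++ (Sum.inr c :: r)) :=
          (List.sublist_cons_self _ _).append (List.sublist_cons_self _ _)
        exact le_trans (hsub.count_le _) (hL x)
  | smallRCons v v₁ c l r hfresh =>
      have h := hL v
      rw [List.count_append, List.count_cons_self,
        List.count_cons_of_ne (by simp)] at h
      have hl : Sum.inl v ∉ l := count_zero_notmem _ _ (by omega)
      have hr : Sum.inl v ∉ r := count_zero_notmem _ _ (by omega)
      rw [subst_id v _ l hl, subst_id v _ r hr]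
      refine ⟨by simp [eqSize], fun x => ?_⟩
      show (l ++ (Sum.inl v₁ :: r)).count (Sum.inl x) ≤ 1
      by_cases hx : x = v₁
      · subst hx
        rw [List.count_append, List.count_cons_self]
        have h0 : (l ++ r).count (Sum.inl x) = 0 := List.count_eq_zero.2 hfresh
        rw [List.count_append] at h0
        omega
      · rw [List.count_append, List.count_cons_of_ne (by simpa using Ne.symm hx),
          ← List.count_append]
        have hsub : List.Sublist (l ++ r) ((Sum.inr c :: l) ++ (Sum.inl v :: r)) :=
          (List.sublist_cons_self _ _).append (List.sublist_cons_self _ _)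
        exact le_trans (hsub.count_le _) (hL x)
  | bigEq v₁ v₂ l r =>
      have h := hL v₂
      dsimp only at h
      rw [List.count_append, List.count_cons_self] at h
      have h1 : l.count (Sum.inl v₂) ≤ (Sum.inl v₁ :: l).count (Sum.inl v₂) :=
        (List.sublist_cons_self _ _).count_le _
      have hl : Sum.inl v₂ ∉ l := count_zero_notmem _ _ (by omega)
      have hr : Sum.inl v₂ ∉ r := count_zero_notmem _ _ (by omega)
      rw [subst_id v₂ _ l hl, subst_id v₂ _ r hr]
      refine ⟨by simp [eqSize]; omega, fun x => ?_⟩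
      have hsub : List.Sublist (l ++ r) ((Sum.inl v₁ :: l) ++ (Sum.inl v₂ :: r)) :=
        (List.sublist_cons_self _ _).append (List.sublist_cons_self _ _)
      exact le_trans (hsub.count_le _) (hL x)

theorem linear_derivation_bound {V C : Type*} [DecidableEq V] [DecidableEq C] (N : ℕ) :
    (∀ e e' : List (WSym V C) × List (WSym V C),
        Linear e → Step e e' → eqSize e' < eqSize e ∧ Linear e') ∧
    (∀ (f : ℕ → List (WSym V C) × List (WSym V C)) (n : ℕ),
        Linear (f 0) → eqSize (f 0) = N →
        (∀ i < n, Step (f i) (f (i + 1))) → n ≤ N) := by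
  refine ⟨step_dec, ?_⟩
  intro f n h0 hN hstep
  have key : ∀ i ≤ n, Linear (f i) ∧ eqSize (f i) + i ≤ N := by
    intro i hi
    induction i with
    | zero => exact ⟨h0, by omega⟩
    | succ k ih =>
      obtain ⟨hLk, hsk⟩ := ih (by omega)
      obtain ⟨hlt, hL'⟩ := step_dec _ _ hLk (hstep k (by omega))
      exact ⟨hL', by omega⟩
  have := (key n le_rfl).2
  omega
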